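/- arXiv:1507.08976 — 5 statements merged into one kernel-verified Lean document; each statement's English description precedes it below -/
import Mathlib

section
/- Let A, B, K be groups, with A acting on B (written ᵃb), and A and B acting on K (written ᵃk and ᵇk). Given a short exact sequence 1 → K → G →^ρ B ⋊ A → 1 and homomorphisms ι_1 : A → G, ι_2 : B → G with ρ∘ι_1 and ρ∘ι_2 the standard inclusions, where the actions on K are given by conjugation by ι_1 and ι_2, define λ(a,b) = ι_1(a) ι_2(b) ι_1(a)^{-1} ι_2(ᵃb)^{-1}. Then λ takes values in K and satisfies: (TB1) λ(a, b_1 b_2) = λ(a,b_1) · (^{ᵃb_1})(λ(a,b_2)); (TB2) λ(a_1 a_2, b) = (^{a_1})(λ(a_2,b)) · λ(a_1, ^{a_2}b); (TB3) λ(a,b) · (^{ᵃb})((^{a})k) · λ(a,b)^{-1} = (^{a})((^{b})k) for all k ∈ K. -/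
/-- The "twisted commutator" `λ(a,b) = ι₁(a) ι₂(b) ι₁(a)⁻¹ ι₂(ᵃb)⁻¹`. -/
def twistedComm {A B G : Type*} [Group A] [Group B] [Group G]
    (φAB : A →* MulAut B) (ι₁ : A →* G) (ι₂ : B →* G) (a : A) (b : B) : G :=
  ι₁ a * ι₂ b * (ι₁ a)⁻¹ * (ι₂ (φAB a b))⁻¹

/-- Given a short exact sequence `1 → K → G →ρ B ⋊ A → 1` (with `K = ker ρ`, `ρ`
surjective) and homomorphisms `ι₁ : A → G`, `ι₂ : B → G` with `ρ ∘ ι₁`, `ρ ∘ ι₂` the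
standard inclusions, the map `λ(a,b) = ι₁(a) ι₂(b) ι₁(a)⁻¹ ι₂(ᵃb)⁻¹` takes values in `K`
and satisfies the twisted bilinearity axioms TB1, TB2, TB3, where the actions of `A` and
`B` on `K` are conjugation by `ι₁` and `ι₂`. -/
theorem twistedComm_twisted_bilinear {A B G : Type*} [Group A] [Group B] [Group G]
    (φAB : A →* MulAut B)
    (ρ : G →* B ⋊[φAB] A) (hρ : Function.Surjective ρ)
    (ι₁ : A →* G) (ι₂ : B →* G)
    (h₁ : ∀ a : A, ρ (ι₁ a) = SemidirectProduct.inr a)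
    (h₂ : ∀ b : B, ρ (ι₂ b) = SemidirectProduct.inl b) :
    -- λ takes values in K = ker ρ
    (∀ (a : A) (b : B), twistedComm φAB ι₁ ι₂ a b ∈ ρ.ker) ∧
    -- TB1
    (∀ (a : A) (b₁ b₂ : B),
      twistedComm φAB ι₁ ι₂ a (b₁ * b₂) =
        twistedComm φAB ι₁ ι₂ a b₁ *
          (ι₂ (φAB a b₁) * twistedComm φAB ι₁ ι₂ a b₂ * (ι₂ (φAB a b₁))⁻¹)) ∧
    -- TB2
    (∀ (a₁ a₂ : A) (b : B),
      twistedComm φAB ι₁ ι₂ (a₁ * a₂) b =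
        (ι₁ a₁ * twistedComm φAB ι₁ ι₂ a₂ b * (ι₁ a₁)⁻¹) *
          twistedComm φAB ι₁ ι₂ a₁ (φAB a₂ b)) ∧
    -- TB3
    (∀ (a : A) (b : B), ∀ k ∈ ρ.ker,
      twistedComm φAB ι₁ ι₂ a b *
          (ι₂ (φAB a b) * (ι₁ a * k * (ι₁ a)⁻¹) * (ι₂ (φAB a b))⁻¹) *
          (twistedComm φAB ι₁ ι₂ a b)⁻¹ =
        ι₁ a * (ι₂ b * k * (ι₂ b)⁻¹) * (ι₁ a)⁻¹) := by
  refine ⟨fun a b => ?_, fun a b₁ b₂ => ?_, fun a₁ a₂ b => ?_, fun a b k hk => ?_⟩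
  · simp only [MonoidHom.mem_ker, twistedComm, map_mul, map_inv, h₁, h₂,
      SemidirectProduct.inl_aut]
    group
  · simp only [twistedComm, map_mul, MulAut.mul_apply]
    group
  · simp only [twistedComm, map_mul, MonoidHom.map_mul, MulAut.mul_apply]
    group
  · simp only [twistedComm]
    group
end

section
/- Let A, B, K be groups with A acting on B and with A, B acting on K, and let λ : A × B → K be a twisted bilinear map (satisfying TB1, TB2, TB3). Define φ : B ⋊ A → Aut(K) by φ(b,a)(k) = ᵇ(ᵃk). Then for all q_1, q_2 in B ⋊ A and k ∈ K, φ(q_1)(φ(q_2)(k)) = γ(q_1,q_2) · φ(q_1 q_2)(k) · γ(q_1,q_2)^{-1}, where γ((b_1,a_1),(b_2,a_2)) = ^{b_1}(λ(a_1, b_2)). -/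
/-- Let `A, B, K` be groups with `A` acting on `B` (via `φAB`) and `A`, `B` acting on `K`
(via `φAK`, `φBK`), and let `λ : A × B → K` be a twisted bilinear map. Define
`φ : B ⋊ A → Aut(K)` by `φ(b,a)(k) = ᵇ(ᵃk)` and
`γ(q₁,q₂) = ^{b₁}(λ(a₁,b₂))`. Then `φ(q₁)(φ(q₂)(k)) = γ(q₁,q₂)·φ(q₁q₂)(k)·γ(q₁,q₂)⁻¹`. -/
theorem twisted_bilinear_phi_conj {A B K : Type*} [Group A] [Group B] [Group K]
    (φAB : A →* MulAut B) (φAK : A →* MulAut K) (φBK : B →* MulAut K)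
    (l : A → B → K)
    (tb1 : ∀ (a : A) (b₁ b₂ : B),
      l a (b₁ * b₂) = l a b₁ * φBK (φAB a b₁) (l a b₂))
    (tb2 : ∀ (a₁ a₂ : A) (b : B),
      l (a₁ * a₂) b = φAK a₁ (l a₂ b) * l a₁ (φAB a₂ b))
    (tb3 : ∀ (a : A) (b : B) (k : K),
      l a b * φBK (φAB a b) (φAK a k) * (l a b)⁻¹ = φAK a (φBK b k)) :
    ∀ (q₁ q₂ : B ⋊[φAB] A) (k : K),
      φBK q₁.left (φAK q₁.right (φBK q₂.left (φAK q₂.right k))) =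
        φBK q₁.left (l q₁.right q₂.left) *
          φBK (q₁ * q₂).left (φAK (q₁ * q₂).right k) *
          (φBK q₁.left (l q₁.right q₂.left))⁻¹ := by
  rintro ⟨b₁, a₁⟩ ⟨b₂, a₂⟩ k
  have h := tb3 a₁ b₂ (φAK a₂ k)
  simp only [SemidirectProduct.mul_left, SemidirectProduct.mul_right, map_mul,
    MulAut.mul_apply, MulEquiv.map_mul, MulEquiv.map_inv]
  rw [← h]
  simp [map_mul, mul_assoc]
end

section
/- Let A, B, K be groups with A acting on B and with A, B acting on K by automorphisms, and let λ : A × B → K be a twisted bilinear map. With γ((b_1,a_1),(b_2,a_2)) = ^{b_1}(λ(a_1, b_2)), the cocycle identity γ(q_1,q_2)·γ(q_1 q_2, q_3) = φ(q_1)(γ(q_2,q_3)) · γ(q_1, q_2 q_3) holds for all q_1, q_2, q_3 ∈ B ⋊ A, where φ(b,a)(k) = ᵇ(ᵃk). -/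
/-- Let `A, B, K` be groups with `A` acting on `B` (via `φAB`) and `A`, `B` acting on `K`
(via `φAK`, `φBK`), and let `λ : A × B → K` be a twisted bilinear map. With
`γ((b₁,a₁),(b₂,a₂)) = ^{b₁}(λ(a₁,b₂))` and `φ(b,a)(k) = ᵇ(ᵃk)`, the cocycle identity
`γ(q₁,q₂)·γ(q₁q₂,q₃) = φ(q₁)(γ(q₂,q₃))·γ(q₁,q₂q₃)` holds. -/
theorem twisted_bilinear_cocycle {A B K : Type*} [Group A] [Group B] [Group K]
    (φAB : A →* MulAut B) (φAK : A →* MulAut K) (φBK : B →* MulAut K)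
    (l : A → B → K)
    (tb1 : ∀ (a : A) (b₁ b₂ : B),
      l a (b₁ * b₂) = l a b₁ * φBK (φAB a b₁) (l a b₂))
    (tb2 : ∀ (a₁ a₂ : A) (b : B),
      l (a₁ * a₂) b = φAK a₁ (l a₂ b) * l a₁ (φAB a₂ b))
    (tb3 : ∀ (a : A) (b : B) (k : K),
      l a b * φBK (φAB a b) (φAK a k) * (l a b)⁻¹ = φAK a (φBK b k)) :
    ∀ q₁ q₂ q₃ : B ⋊[φAB] A,
      φBK q₁.left (l q₁.right q₂.left) *
          φBK (q₁ * q₂).left (l (q₁ * q₂).right q₃.left) =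
        φBK q₁.left (φAK q₁.right (φBK q₂.left (l q₂.right q₃.left))) *
          φBK q₁.left (l q₁.right (q₂ * q₃).left) := by
  have key : ∀ (a : A) (b : B) (k : K),
      l a b * φBK (φAB a b) (φAK a k) = φAK a (φBK b k) * l a b := fun a b k =>
    mul_inv_eq_iff_eq_mul.mp (tb3 a b k)
  rintro ⟨b₁, a₁⟩ ⟨b₂, a₂⟩ ⟨b₃, a₃⟩
  simp only [SemidirectProduct.mul_left, SemidirectProduct.mul_right, tb1, tb2, map_mul, MulAut.mul_apply,
    mul_assoc]
  rw [← mul_assoc (φBK b₁ (l a₁ b₂)), ← map_mul, key, map_mul, mul_assoc]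
end

section
/- Let A, B, K be groups with compatible actions and λ : A × B → K a twisted bilinear map. Then the set G = K × (B ⋊ A) with multiplication (k_1, q_1)(k_2, q_2) = (k_1 · φ(q_1)(k_2) · γ(q_1,q_2), q_1 q_2), where φ(b,a)(k) = ᵇ(ᵃk) and γ((b_1,a_1),(b_2,a_2)) = ^{b_1}λ(a_1,b_2), is a group, and the projection G → B ⋊ A is a surjective homomorphism with kernel isomorphic to K via k ↦ (k, 1). -/
/-- The multiplication `(k₁,q₁)(k₂,q₂) = (k₁ · φ(q₁)(k₂) · γ(q₁,q₂), q₁q₂)` on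
`K × (B ⋊ A)` determined by a twisted bilinear map `λ : A × B → K`, where
`φ(b,a)(k) = ᵇ(ᵃk)` and `γ((b₁,a₁),(b₂,a₂)) = ^{b₁}λ(a₁,b₂)`. -/
def extMul {A B K : Type*} [Group A] [Group B] [Group K]
    (φAB : A →* MulAut B) (φAK : A →* MulAut K) (φBK : B →* MulAut K)
    (l : A → B → K)
    (p q : K × (B ⋊[φAB] A)) : K × (B ⋊[φAB] A) :=
  (p.1 * φBK p.2.left (φAK p.2.right q.1) *
      φBK p.2.left (l p.2.right q.2.left),
    p.2 * q.2)

/-- From a right-inverse in a monoid-like structure, get a two-sided inverse. -/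
private lemma rightInv_to_inv {G : Type*} (m : G → G → G) (e : G)
    (assoc : ∀ p q r, m (m p q) r = m p (m q r))
    (he : ∀ p, m e p = p) (he' : ∀ p, m p e = p)
    (hinv : ∀ p, ∃ q, m p q = e) :
    ∀ p, ∃ q, m p q = e ∧ m q p = e := by
  intro p
  obtain ⟨q, hq⟩ := hinv p
  obtain ⟨r, hr⟩ := hinv q
  refine ⟨q, hq, ?_⟩
  have : m q p = m (m q p) (m q r) := by rw [hr, he']
  rw [this, assoc, ← assoc p q r, hq, he, hr]

/-- For a twisted bilinear map `λ : A × B → K`, the set `K × (B ⋊ A)` with multiplication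
`(k₁,q₁)(k₂,q₂) = (k₁ · φ(q₁)(k₂) · γ(q₁,q₂), q₁q₂)` is a group; the projection to
`B ⋊ A` is a surjective homomorphism whose kernel is `{(k,1)}`, isomorphic to `K` via
`k ↦ (k,1)`. -/
theorem extMul_group {A B K : Type*} [Group A] [Group B] [Group K]
    (φAB : A →* MulAut B) (φAK : A →* MulAut K) (φBK : B →* MulAut K)
    (l : A → B → K)
    (tb1 : ∀ (a : A) (b₁ b₂ : B),
      l a (b₁ * b₂) = l a b₁ * φBK (φAB a b₁) (l a b₂))
    (tb2 : ∀ (a₁ a₂ : A) (b : B),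
      l (a₁ * a₂) b = φAK a₁ (l a₂ b) * l a₁ (φAB a₂ b))
    (tb3 : ∀ (a : A) (b : B) (k : K),
      l a b * φBK (φAB a b) (φAK a k) * (l a b)⁻¹ = φAK a (φBK b k)) :
    -- group axioms
    (∀ p q r : K × (B ⋊[φAB] A),
      extMul φAB φAK φBK l (extMul φAB φAK φBK l p q) r =
        extMul φAB φAK φBK l p (extMul φAB φAK φBK l q r)) ∧
    (∀ p : K × (B ⋊[φAB] A), extMul φAB φAK φBK l (1, 1) p = p) ∧
    (∀ p : K × (B ⋊[φAB] A), extMul φAB φAK φBK l p (1, 1) = p) ∧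
    (∀ p : K × (B ⋊[φAB] A), ∃ q : K × (B ⋊[φAB] A),
      extMul φAB φAK φBK l p q = (1, 1) ∧ extMul φAB φAK φBK l q p = (1, 1)) ∧
    -- the projection is a surjective homomorphism with kernel `{(k,1)} ≅ K`
    (∀ p q : K × (B ⋊[φAB] A), (extMul φAB φAK φBK l p q).2 = p.2 * q.2) ∧
    Function.Surjective (Prod.snd : K × (B ⋊[φAB] A) → B ⋊[φAB] A) ∧
    (∀ p : K × (B ⋊[φAB] A), p.2 = 1 ↔ ∃ k : K, p = (k, 1)) ∧
    (∀ k k' : K, extMul φAB φAK φBK l (k, 1) (k', 1) = (k * k', 1)) := by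
  -- `λ(a, 1) = 1`
  have hl1 : ∀ a : A, l a 1 = 1 := by
    intro a
    have h := tb1 a 1 1
    rw [mul_one, left_eq_mul] at h
    simpa using h
  -- `λ(1, b) = 1`
  have hl2 : ∀ b : B, l 1 b = 1 := by
    intro b
    have h := tb2 1 1 b
    simp only [one_mul, map_one, MulAut.one_apply] at h
    exact (left_eq_mul.mp h)
  -- reformulation of tb3
  have hconj : ∀ (a : A) (b : B) (k : K),
      φBK (φAB a b) (φAK a k) = (l a b)⁻¹ * (φAK a (φBK b k) * l a b) := by
    intro a b k
    have h := tb3 a b k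
    rw [mul_inv_eq_iff_eq_mul] at h
    rw [← h]; group
  -- associativity
  have hassoc : ∀ p q r : K × (B ⋊[φAB] A),
      extMul φAB φAK φBK l (extMul φAB φAK φBK l p q) r =
        extMul φAB φAK φBK l p (extMul φAB φAK φBK l q r) := by
    rintro ⟨k₁, b₁, a₁⟩ ⟨k₂, b₂, a₂⟩ ⟨k₃, b₃, a₃⟩
    refine Prod.ext ?_ (mul_assoc _ _ _)
    simp only [extMul, SemidirectProduct.mul_left, SemidirectProduct.mul_right, map_mul,
      MulAut.mul_apply, tb2, tb1, hconj, map_inv, mul_assoc]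
    group
  -- identities
  have hone : ∀ p : K × (B ⋊[φAB] A), extMul φAB φAK φBK l (1, 1) p = p := by
    rintro ⟨k, x⟩
    simp [extMul, hl2]
  have hone' : ∀ p : K × (B ⋊[φAB] A), extMul φAB φAK φBK l p (1, 1) = p := by
    rintro ⟨k, x⟩
    simp [extMul, hl1]
  -- right inverses
  have hrinv : ∀ p : K × (B ⋊[φAB] A), ∃ q : K × (B ⋊[φAB] A),
      extMul φAB φAK φBK l p q = (1, 1) := by
    rintro ⟨k, x⟩
    refine ⟨((φAK x.right).symm ((φBK x.left).symm
      (k⁻¹ * (φBK x.left (l x.right x⁻¹.left))⁻¹)), x⁻¹), ?_⟩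
    refine Prod.ext ?_ (mul_inv_cancel x)
    simp [extMul, mul_assoc]
  refine ⟨hassoc, hone, hone',
    rightInv_to_inv _ _ hassoc hone hone' hrinv, fun p q => rfl,
    fun q => ⟨(1, q), rfl⟩, ?_, ?_⟩
  · intro p
    exact ⟨fun h => ⟨p.1, Prod.ext rfl h⟩, by rintro ⟨k, rfl⟩; rfl⟩
  · intro k k'
    simp [extMul, hl2]
end

section
/- Let F be free on basis X, let IA(F) ≤ Aut(F) be the subgroup acting trivially on F^{ab} ≅ Z^{|X|}, and define τ : IA(F) → Hom(Z^{|X|}, ⋀² Z^{|X|}) by τ(f)([z]) = π(f(z)·z^{-1}) for z ∈ F, where π : [F,F] → ⋀² Z^{|X|} is reduction modulo [F,[F,F]]. Then τ is a well-defined group homomorphism (the Johnson homomorphism). -/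
/-- The abelianization map `F(X) → ℤ^X`, written multiplicatively. -/
def freeAb (X : Type*) [DecidableEq X] : FreeGroup X →* Multiplicative (X → ℤ) :=
  FreeGroup.lift fun i => Multiplicative.ofAdd (Pi.single i 1)

/-- The wedge `v ∧ w`, as an element of `⋀² ℤ^X`. -/
def wedgeSq (X : Type*) (v w : X → ℤ) : ⋀[ℤ]^2 (X → ℤ) :=
  ⟨ExteriorAlgebra.ιMulti ℤ 2 ![v, w],
    ExteriorAlgebra.ιMulti_range ℤ 2 (Set.mem_range_self _)⟩

/-- The Torelli subgroup `IA(F) ≤ Aut(F)` of automorphisms acting trivially on the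
abelianization. -/
def IAsubgroup (X : Type*) [DecidableEq X] : Subgroup (MulAut (FreeGroup X)) where
  carrier := {f | ∀ z : FreeGroup X, freeAb X (f z) = freeAb X z}
  one_mem' := fun _ => rfl
  mul_mem' := by
    intro f g hf hg z
    exact (hf (g z)).trans (hg z)
  inv_mem' := by
    intro f hf z
    have := hf (f⁻¹ z)
    simpa using this.symm

open scoped commutatorElement

/-- The Johnson homomorphism is well defined: for `F` free on a (finite) basis `X`,
given the projection `π : [F,F] → ⋀² ℤ^X` with kernel `[F,[F,F]]`, there is a map
`τ : IA(F) → Hom(ℤ^X, ⋀² ℤ^X)` with `τ(f)([z]) = π(f(z)·z⁻¹)` for all `z ∈ F`, and `τ` is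
a group homomorphism. -/
theorem johnson_well_defined_hom (X : Type*) [DecidableEq X] [Fintype X]
    (π : FreeGroup X → ⋀[ℤ]^2 (X → ℤ))
    (hπ_comm : ∀ u v : FreeGroup X,
      π ⁅u, v⁆ = wedgeSq X (Multiplicative.toAdd (freeAb X u))
        (Multiplicative.toAdd (freeAb X v)))
    (hπ_mul : ∀ u ∈ (⊤ : Subgroup (FreeGroup X)).lowerCentralSeries 1,
      ∀ v ∈ (⊤ : Subgroup (FreeGroup X)).lowerCentralSeries 1, π (u * v) = π u + π v)
    (hπ_ker : ∀ u ∈ (⊤ : Subgroup (FreeGroup X)).lowerCentralSeries 1,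
      (π u = 0 ↔ u ∈ (⊤ : Subgroup (FreeGroup X)).lowerCentralSeries 2))
    (hab_ker : ∀ z : FreeGroup X,
      freeAb X z = 1 ↔ z ∈ (⊤ : Subgroup (FreeGroup X)).lowerCentralSeries 1) :
    ∃ τ : IAsubgroup X → ((X → ℤ) →+ ⋀[ℤ]^2 (X → ℤ)),
      (∀ (f : IAsubgroup X) (z : FreeGroup X),
        τ f (Multiplicative.toAdd (freeAb X z)) =
          π ((f : MulAut (FreeGroup X)) z * z⁻¹)) ∧
      (∀ f g : IAsubgroup X, τ (f * g) = τ f + τ g) := by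
  classical
  have h2le1 : (⊤ : Subgroup (FreeGroup X)).lowerCentralSeries 2 ≤ (⊤ : Subgroup (FreeGroup X)).lowerCentralSeries 1 :=
    Subgroup.lowerCentralSeries_antitone _ (by norm_num)
  have π1 : π 1 = 0 := (hπ_ker 1 (one_mem _)).mpr (one_mem _)
  have hconj : ∀ (z c : FreeGroup X), c ∈ (⊤ : Subgroup (FreeGroup X)).lowerCentralSeries 1 →
      π (z * c * z⁻¹) = π c := by
    intro z c hc
    have hcz : ⁅c, z⁆ ∈ (⊤ : Subgroup (FreeGroup X)).lowerCentralSeries 2 := by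
      rw [show (2:ℕ) = 1 + 1 from rfl, Subgroup.lowerCentralSeries_succ]
      exact Subgroup.subset_closure ⟨c, hc, z, Subgroup.mem_top z, rfl⟩
    have hzc : ⁅z, c⁆ ∈ (⊤ : Subgroup (FreeGroup X)).lowerCentralSeries 2 := by
      have := ((⊤ : Subgroup (FreeGroup X)).lowerCentralSeries 2).inv_mem hcz
      rwa [commutatorElement_inv] at this
    have key : z * c * z⁻¹ = ⁅z, c⁆ * c := by group
    rw [key, hπ_mul _ (h2le1 hzc) c hc, (hπ_ker _ (h2le1 hzc)).mpr hzc, zero_add]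
  -- membership of f z * z⁻¹ in γ₁
  have hmem : ∀ (f : IAsubgroup X) (z : FreeGroup X),
      (f : MulAut (FreeGroup X)) z * z⁻¹ ∈ (⊤ : Subgroup (FreeGroup X)).lowerCentralSeries 1 := by
    intro f z
    rw [← hab_ker, map_mul, map_inv, f.2 z, mul_inv_cancel]
  -- additivity of J f
  have hJmul : ∀ (f : IAsubgroup X) (z w : FreeGroup X),
      π ((f : MulAut (FreeGroup X)) (z * w) * (z * w)⁻¹)
        = π ((f : MulAut (FreeGroup X)) z * z⁻¹)
          + π ((f : MulAut (FreeGroup X)) w * w⁻¹) := by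
    intro f z w
    have hw := hmem f w
    have hz := hmem f z
    have key : (f : MulAut (FreeGroup X)) (z * w) * (z * w)⁻¹
        = ((f : MulAut (FreeGroup X)) z * z⁻¹)
          * (z * ((f : MulAut (FreeGroup X)) w * w⁻¹) * z⁻¹) := by
      rw [map_mul]; group
    have hconjmem : z * ((f : MulAut (FreeGroup X)) w * w⁻¹) * z⁻¹
        ∈ (⊤ : Subgroup (FreeGroup X)).lowerCentralSeries 1 :=
      (Subgroup.lowerCentralSeries_normal _ 1).conj_mem _ hw z
    rw [key, hπ_mul _ hz _ hconjmem, hconj z _ hw]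
  -- the linear map associated to f
  set L : IAsubgroup X → ((X → ℤ) →ₗ[ℤ] ⋀[ℤ]^2 (X → ℤ)) := fun f =>
    (Pi.basisFun ℤ X).constr ℤ
      (fun i => π ((f : MulAut (FreeGroup X)) (FreeGroup.of i) * (FreeGroup.of i)⁻¹))
    with hL
  have hkey : ∀ (f : IAsubgroup X) (z : FreeGroup X),
      L f (Multiplicative.toAdd (freeAb X z)) = π ((f : MulAut (FreeGroup X)) z * z⁻¹) := by
    intro f
    let Φ : FreeGroup X →* Multiplicative (⋀[ℤ]^2 (X → ℤ)) :=
      { toFun := fun z => Multiplicative.ofAdd (π ((f : MulAut (FreeGroup X)) z * z⁻¹))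
        map_one' := by
          show Multiplicative.ofAdd (π ((f : MulAut (FreeGroup X)) 1 * 1⁻¹)) = 1
          have h1 : (f : MulAut (FreeGroup X)) (1 : FreeGroup X) * (1 : FreeGroup X)⁻¹ = 1 := by
            simp
          rw [h1, π1]; rfl
        map_mul' := fun z w => by
          have := hJmul f z w
          exact (congrArg Multiplicative.ofAdd this).trans (ofAdd_add _ _) }
    let Ψ : FreeGroup X →* Multiplicative (⋀[ℤ]^2 (X → ℤ)) :=
      (AddMonoidHom.toMultiplicative (L f).toAddMonoidHom).comp (freeAb X)
    have hΨΦ : Ψ = Φ := by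
      apply FreeGroup.ext_hom
      intro a
      show Multiplicative.ofAdd (L f (Multiplicative.toAdd (freeAb X (FreeGroup.of a))))
          = Multiplicative.ofAdd (π ((f : MulAut (FreeGroup X)) (FreeGroup.of a) * (FreeGroup.of a)⁻¹))
      congr 1
      have hab : freeAb X (FreeGroup.of a) = Multiplicative.ofAdd (Pi.single a 1) :=
        FreeGroup.lift_apply_of
      rw [hab, toAdd_ofAdd, hL]
      have := (Pi.basisFun ℤ X).constr_basis ℤ
        (fun i => π ((f : MulAut (FreeGroup X)) (FreeGroup.of i) * (FreeGroup.of i)⁻¹)) a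
      rwa [Pi.basisFun_apply] at this
    intro z
    have := congrArg (fun h : FreeGroup X →* Multiplicative (⋀[ℤ]^2 (X → ℤ)) => h z) hΨΦ
    exact congrArg Multiplicative.toAdd this
  refine ⟨fun f => (L f).toAddMonoidHom, hkey, ?_⟩
  intro f g
  have : L (f * g) = L f + L g := by
    apply (Pi.basisFun ℤ X).ext
    intro i
    rw [Pi.basisFun_apply]
    have hsingle : (Pi.single i 1 : X → ℤ)
        = Multiplicative.toAdd (freeAb X (FreeGroup.of i)) := by
      rw [show freeAb X (FreeGroup.of i) = Multiplicative.ofAdd (Pi.single i 1) from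
        FreeGroup.lift_apply_of, toAdd_ofAdd]
    rw [LinearMap.add_apply, hsingle, hkey (f * g), hkey f, hkey g]
    set u := FreeGroup.of i
    have hfg : ((f * g : IAsubgroup X) : MulAut (FreeGroup X)) u
        = (f : MulAut (FreeGroup X)) ((g : MulAut (FreeGroup X)) u) := rfl
    have key : ((f * g : IAsubgroup X) : MulAut (FreeGroup X)) u * u⁻¹
        = ((f : MulAut (FreeGroup X)) ((g : MulAut (FreeGroup X)) u)
            * ((g : MulAut (FreeGroup X)) u)⁻¹)
          * ((g : MulAut (FreeGroup X)) u * u⁻¹) := by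
      rw [hfg]; group
    rw [key, hπ_mul _ (hmem f _) _ (hmem g _)]
    congr 1
    have h1 := hkey f ((g : MulAut (FreeGroup X)) u)
    have h2 := hkey f u
    rw [← h1, ← h2, g.2 u]
  apply AddMonoidHom.ext
  intro v
  show L (f * g) v = L f v + L g v
  rw [this, LinearMap.add_apply]
end
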